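/- In the renewal setup, let 𝕊 be a finite set, let (ξ_k)_{k≥0} be an i.i.d. 𝕊-valued sequence with P[ξ₀ = i] = p_i, independent of the dwell-time sequence (S(k))_{k≥1}, and let λ : 𝕊 → ℝ assign a constant λ_i to each mode. Define the switching signal r(t) = ξ_k for t ∈ [t_k, t_{k+1}). Then, almost surely, (1/t)·∫_0^t λ_{r(h)} dh → Σ_{i∈𝕊} p_i·λ_i as t → ∞. -/

import Mathlib

open Set Filter MeasureTheory ProbabilityTheory

/-- The renewal (arrival) times: `renewalTime S k ω = S 1 ω + ⋯ + S k ω`, with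
`renewalTime S 0 ω = 0`. -/
noncomputable def renewalTime {Ω : Type*} (S : ℕ → Ω → ℝ) (k : ℕ) (ω : Ω) : ℝ :=
  ∑ j ∈ Finset.Icc 1 k, S j ω

open Topology

/-! ### Auxiliary lemmas -/

section RenewalTimeLemmas

lemma renewalTime_eq_sum_range {Ω : Type*} (S : ℕ → Ω → ℝ) (n : ℕ) (ω : Ω) :
    renewalTime S n ω = ∑ i ∈ Finset.range n, S (i + 1) ω := by
  unfold renewalTime
  rw [← Finset.Ico_add_one_right_eq_Icc, Finset.sum_Ico_eq_sum_range]
  simp [add_comm]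

lemma renewalTime_zero {Ω : Type*} (S : ℕ → Ω → ℝ) (ω : Ω) : renewalTime S 0 ω = 0 := by
  simp [renewalTime]

lemma renewalTime_succ {Ω : Type*} (S : ℕ → Ω → ℝ) (n : ℕ) (ω : Ω) :
    renewalTime S (n + 1) ω = renewalTime S n ω + S (n + 1) ω := by
  rw [renewalTime_eq_sum_range, renewalTime_eq_sum_range, Finset.sum_range_succ]

end RenewalTimeLemmas

section StepFunction

lemma step_ae {g : ℝ → ℝ} {a b c : ℝ}
    (h : ∀ s ∈ Set.Ico a b, g s = c) :
    ∀ᵐ s ∂(volume : Measure ℝ), s ∈ Set.Ioc a b → g s = c := by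
  refine (ae_iff).2 (measure_mono_null ?_ (Real.volume_singleton (a := b)))
  intro s hs
  simp only [Set.mem_setOf_eq, Classical.not_imp] at hs
  rw [Set.mem_singleton_iff]
  by_contra hne
  exact hs.2 (h s ⟨hs.1.1.le, lt_of_le_of_ne hs.1.2 hne⟩)

lemma step_intervalIntegrable {g : ℝ → ℝ} {a b c : ℝ} (hab : a ≤ b)
    (h : ∀ s ∈ Set.Ico a b, g s = c) :
    IntervalIntegrable g volume a b := by
  refine (intervalIntegrable_iff_integrableOn_Ioc_of_le hab).2 ?_
  have hae : (fun _ : ℝ => c) =ᵐ[volume.restrict (Set.Ioc a b)] g := by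
    rw [Filter.EventuallyEq, ae_restrict_iff' measurableSet_Ioc]
    exact (step_ae h).mono fun s hs hmem => (hs hmem).symm
  exact (integrableOn_const measure_Ioc_lt_top.ne).congr hae

lemma step_integral {g : ℝ → ℝ} {a b c : ℝ} (hab : a ≤ b)
    (h : ∀ s ∈ Set.Ico a b, g s = c) :
    (∫ s in a..b, g s) = c * (b - a) := by
  have h1 : (∫ s in a..b, g s) = ∫ _ in a..b, c := by
    apply intervalIntegral.integral_congr_ae
    rw [Set.uIoc_of_le hab]
    exact step_ae h
  rw [h1, intervalIntegral.integral_const, smul_eq_mul, mul_comm]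

end StepFunction

section Deterministic

lemma nat_succ_div_tendsto : Tendsto (fun n : ℕ => ((n : ℝ) + 1) / n) atTop (𝓝 1) := by
  have h : Tendsto (fun n : ℕ => 1 + 1 / (n : ℝ)) atTop (𝓝 (1 + 0)) :=
    tendsto_const_nhds.add tendsto_one_div_atTop_nhds_zero_nat
  rw [add_zero] at h
  refine h.congr' ?_
  filter_upwards [eventually_ge_atTop 1] with n hn
  have hn' : (n : ℝ) ≠ 0 := Nat.cast_ne_zero.2 (by omega)
  field_simp

/-- Deterministic renewal-type limit: if the renewal times `T n` grow like `θ n`, the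
accumulated sums `A n` grow like `m θ n`, the rates `a n` are bounded, and
`F t = A n + a n (t - T n)` on `[T n, T (n+1))`, then `F t / t → m`. -/
lemma detRenewal (T A a : ℕ → ℝ) (C m θ : ℝ) (hθ : 0 < θ)
    (hT0 : T 0 = 0) (hTmono : StrictMono T)
    (hTlim : Tendsto (fun n : ℕ => T n / n) atTop (𝓝 θ))
    (hAlim : Tendsto (fun n : ℕ => A n / n) atTop (𝓝 (m * θ)))
    (haC : ∀ n, |a n| ≤ C)
    (F : ℝ → ℝ)
    (hF : ∀ n, ∀ t ∈ Set.Ico (T n) (T (n + 1)), F t = A n + a n * (t - T n)) :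
    Tendsto (fun t : ℝ => F t / t) atTop (𝓝 m) := by
  classical
  have hC : 0 ≤ C := le_trans (abs_nonneg _) (haC 0)
  -- `T (n+1) / n → θ`
  have hshift : Tendsto (fun n : ℕ => T (n + 1) / n) atTop (𝓝 θ) := by
    have h1 : Tendsto (fun n : ℕ => T (n + 1) / ((n : ℝ) + 1) * (((n : ℝ) + 1) / n))
        atTop (𝓝 (θ * 1)) := by
      refine Tendsto.mul ?_ nat_succ_div_tendsto
      have := hTlim.comp (tendsto_add_atTop_nat 1)
      refine this.congr fun n => ?_
      simp [Function.comp]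
    rw [mul_one] at h1
    refine h1.congr' ?_
    filter_upwards [eventually_ge_atTop 1] with n hn
    have hn' : (n : ℝ) ≠ 0 := Nat.cast_ne_zero.2 (by omega)
    have hn1 : (n : ℝ) + 1 ≠ 0 := by positivity
    field_simp
  -- the error term
  set D : ℕ → ℝ := fun n => |A n - m * T n| + (C + |m|) * (T (n + 1) - T n) with hD_def
  have hD : Tendsto (fun n : ℕ => D n / n) atTop (𝓝 0) := by
    have h1 : Tendsto (fun n : ℕ => |A n / n - m * (T n / n)| +
        (C + |m|) * (T (n + 1) / n - T n / n)) atTop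
        (𝓝 (|m * θ - m * θ| + (C + |m|) * (θ - θ))) := by
      exact ((hAlim.sub (hTlim.const_mul m)).abs).add
        (((hshift.sub hTlim)).const_mul (C + |m|))
    simp only [sub_self, abs_zero, mul_zero, add_zero] at h1
    refine h1.congr' ?_
    filter_upwards [eventually_ge_atTop 1] with n hn
    have hn0 : (0 : ℝ) < n := by exact_mod_cast Nat.pos_of_ne_zero (by omega)
    have hn' : (n : ℝ) ≠ 0 := ne_of_gt hn0
    have e1 : |A n / n - m * (T n / n)| = |A n - m * T n| / n := by
      rw [show A n / n - m * (T n / n) = (A n - m * T n) / n by field_simp,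
        abs_div, abs_of_pos hn0]
    have e2 : (C + |m|) * (T (n + 1) / n - T n / n) = (C + |m|) * (T (n + 1) - T n) / n := by
      field_simp
    rw [e1, e2, hD_def, add_div]
  -- `T → ∞`
  have hTtop : Tendsto T atTop atTop := by
    have h1 : Tendsto (fun n : ℕ => T n / n * n) atTop atTop :=
      Tendsto.pos_mul_atTop hθ hTlim tendsto_natCast_atTop_atTop
    refine h1.congr' ?_
    filter_upwards [eventually_ge_atTop 1] with n hn
    have hn' : (n : ℝ) ≠ 0 := Nat.cast_ne_zero.2 (by omega)
    field_simp
  rw [Metric.tendsto_atTop]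
  intro ε hε
  -- choose N
  have hev : ∀ᶠ n : ℕ in atTop, (θ / 2) * n < T n ∧ D n / n < ε * θ / 4 := by
    have h1 : ∀ᶠ n : ℕ in atTop, θ / 2 < T n / n :=
      hTlim.eventually (eventually_gt_nhds (by linarith))
    have h2 : ∀ᶠ n : ℕ in atTop, D n / n < ε * θ / 4 :=
      hD.eventually (eventually_lt_nhds (by positivity))
    filter_upwards [h1, h2, eventually_ge_atTop 1] with n hn1 hn2 hn3
    have hn0 : (0 : ℝ) < n := by exact_mod_cast Nat.pos_of_ne_zero (by omega)
    exact ⟨(lt_div_iff₀ hn0).1 hn1, hn2⟩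
  obtain ⟨N0, hN0⟩ := hev.exists_forall_of_atTop
  set N := max N0 1 with hN_def
  have hNprop : ∀ n, N ≤ n → (θ / 2) * n < T n ∧ D n / n < ε * θ / 4 :=
    fun n hn => hN0 n (le_trans (le_max_left _ _) hn)
  have hN1 : 1 ≤ N := le_max_right _ _
  refine ⟨T N, fun t ht => ?_⟩
  -- find n with T n ≤ t < T (n+1)
  have hex : ∃ k, t < T k := (hTtop.eventually_gt_atTop t).exists
  have hTNpos : 0 < T N := by
    have : (0:ℝ) < (θ / 2) * N := by
      have : (0:ℝ) < (N:ℝ) := by exact_mod_cast Nat.pos_of_ne_zero (by omega)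
      positivity
    linarith [(hNprop N le_rfl).1]
  have htpos : 0 < t := lt_of_lt_of_le hTNpos ht
  have hk0 : t < T (Nat.find hex) := Nat.find_spec hex
  have hk0ne : Nat.find hex ≠ 0 := by
    intro h
    rw [h, hT0] at hk0
    linarith
  obtain ⟨n, hn_eq⟩ : ∃ n, Nat.find hex = n + 1 := ⟨Nat.find hex - 1, by omega⟩
  have hTn_le : T n ≤ t := not_lt.1 (Nat.find_min hex (by omega))
  have ht_lt : t < T (n + 1) := by rw [← hn_eq]; exact hk0
  have hnN : N ≤ n := by
    by_contra hcon
    push_neg at hcon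
    have : T (n + 1) ≤ T N := hTmono.monotone (by omega)
    linarith
  obtain ⟨hTgt, hDn⟩ := hNprop n hnN
  have hn0 : (0 : ℝ) < n := by
    have : (1:ℕ) ≤ n := le_trans hN1 hnN
    exact_mod_cast Nat.pos_of_ne_zero (by omega)
  -- the key bound
  have hFt : F t = A n + a n * (t - T n) := hF n t ⟨hTn_le, ht_lt⟩
  have hbound : |F t - m * t| ≤ D n := by
    have e : F t - m * t = (A n - m * T n) + (a n - m) * (t - T n) := by rw [hFt]; ring
    rw [e]
    calc |(A n - m * T n) + (a n - m) * (t - T n)|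
        ≤ |A n - m * T n| + |(a n - m) * (t - T n)| := abs_add_le _ _
      _ = |A n - m * T n| + |a n - m| * (t - T n) := by
          rw [abs_mul, abs_of_nonneg (by linarith : (0:ℝ) ≤ t - T n)]
      _ ≤ |A n - m * T n| + (C + |m|) * (T (n + 1) - T n) := by
          have hb1 : |a n - m| ≤ C + |m| :=
            le_trans (abs_sub _ _) (add_le_add_left (haC n) _)
          have hb2 : t - T n ≤ T (n + 1) - T n := by linarith
          have hb3 : 0 ≤ t - T n := by linarith
          have := mul_le_mul hb1 hb2 hb3 (by linarith [abs_nonneg (a n), abs_nonneg m])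
          linarith
      _ = D n := rfl
  have hDn' : D n < ε * θ / 4 * n := (div_lt_iff₀ hn0).1 hDn
  rw [Real.dist_eq]
  have e3 : F t / t - m = (F t - m * t) / t := by field_simp
  rw [e3, abs_div, abs_of_pos htpos, div_lt_iff₀ htpos]
  have h4 : θ / 2 * n < t := lt_of_lt_of_le hTgt hTn_le
  have h5 : ε * (θ / 2 * ↑n) < ε * t := mul_lt_mul_of_pos_left h4 hε
  have h6 : 0 < ε * θ * ↑n := by positivity
  have hx : |F t - m * t| < ε * θ / 4 * ↑n := lt_of_le_of_lt hbound hDn'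
  linarith [h5, h6, hx]

end Deterministic

section Independence

universe u

/-- Merging two independent i.i.d.-type families into a single jointly independent family
indexed by `ℕ ⊕ ℕ`. -/
lemma merged_iIndepFun {Ω : Type*} [MeasurableSpace Ω] {P : Measure Ω} [IsProbabilityMeasure P]
    {𝕊 : Type u} [MeasurableSpace 𝕊] {R : Type u} [MeasurableSpace R]
    {S : ℕ → Ω → R}
    (hSindep : iIndepFun S P)
    {ξ : ℕ → Ω → 𝕊}
    (hξindep : iIndepFun ξ P)
    (hξS : IndepFun (fun ω k => ξ k ω) (fun ω k => S k ω) P) :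
    iIndepFun (m := fun i : ℕ ⊕ ℕ => Sum.rec
        (motive := fun i => MeasurableSpace (Sum.elim (fun _ : ℕ => 𝕊) (fun _ : ℕ => R) i))
        (fun _ => (inferInstance : MeasurableSpace 𝕊))
        (fun _ => (inferInstance : MeasurableSpace R)) i)
      (fun i : ℕ ⊕ ℕ => Sum.rec
        (motive := fun i => Ω → Sum.elim (fun _ : ℕ => 𝕊) (fun _ : ℕ => R) i)
        (fun k => ξ k) (fun k => S k) i) P := by
  classical
  rw [iIndepFun_iff_measure_inter_preimage_eq_mul]
  intro s sets hmeas
  set A := s.toLeft with hA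
  set B := s.toRight with hB
  have hsplit : (⋂ i ∈ s, (Sum.rec
        (motive := fun i => Ω → Sum.elim (fun _ : ℕ => 𝕊) (fun _ : ℕ => R) i)
        (fun k => ξ k) (fun k => S k) i) ⁻¹' sets i)
      = (⋂ k ∈ A, ξ k ⁻¹' sets (Sum.inl k)) ∩ (⋂ k ∈ B, S k ⁻¹' sets (Sum.inr k)) := by
    ext ω
    simp only [Set.mem_iInter, Set.mem_inter_iff, Set.mem_preimage, Finset.mem_toLeft,
      Finset.mem_toRight, hA, hB]
    constructor
    · intro h
      exact ⟨fun k hk => h (Sum.inl k) hk, fun k hk => h (Sum.inr k) hk⟩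
    · rintro ⟨h1, h2⟩ (k | k) hk
      · exact h1 k hk
      · exact h2 k hk
  have hmeasL : MeasurableSet (⋂ k ∈ A, (fun g : ℕ → 𝕊 => g k) ⁻¹' sets (Sum.inl k)) :=
    MeasurableSet.biInter A.countable_toSet fun k hk =>
      (measurable_pi_apply k) (hmeas (Sum.inl k) (Finset.mem_toLeft.1 hk))
  have hmeasR : MeasurableSet (⋂ k ∈ B, (fun g : ℕ → R => g k) ⁻¹' sets (Sum.inr k)) :=
    MeasurableSet.biInter B.countable_toSet fun k hk =>
      (measurable_pi_apply k) (hmeas (Sum.inr k) (Finset.mem_toRight.1 hk))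
  have hξev : (⋂ k ∈ A, ξ k ⁻¹' sets (Sum.inl k))
      = (fun ω k => ξ k ω) ⁻¹' (⋂ k ∈ A, (fun g : ℕ → 𝕊 => g k) ⁻¹' sets (Sum.inl k)) := by
    rw [Set.preimage_iInter₂]; rfl
  have hSev : (⋂ k ∈ B, S k ⁻¹' sets (Sum.inr k))
      = (fun ω k => S k ω) ⁻¹' (⋂ k ∈ B, (fun g : ℕ → R => g k) ⁻¹' sets (Sum.inr k)) := by
    rw [Set.preimage_iInter₂]; rfl
  have hmul : P ((⋂ k ∈ A, ξ k ⁻¹' sets (Sum.inl k)) ∩ (⋂ k ∈ B, S k ⁻¹' sets (Sum.inr k)))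
      = P (⋂ k ∈ A, ξ k ⁻¹' sets (Sum.inl k)) * P (⋂ k ∈ B, S k ⁻¹' sets (Sum.inr k)) := by
    rw [hξev, hSev]
    exact hξS.measure_inter_preimage_eq_mul _ _ hmeasL hmeasR
  have hξprod : P (⋂ k ∈ A, ξ k ⁻¹' sets (Sum.inl k))
      = ∏ k ∈ A, P (ξ k ⁻¹' sets (Sum.inl k)) :=
    hξindep.measure_inter_preimage_eq_mul A fun k hk => hmeas (Sum.inl k) (Finset.mem_toLeft.1 hk)
  have hSprod : P (⋂ k ∈ B, S k ⁻¹' sets (Sum.inr k))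
      = ∏ k ∈ B, P (S k ⁻¹' sets (Sum.inr k)) :=
    hSindep.measure_inter_preimage_eq_mul B fun k hk => hmeas (Sum.inr k) (Finset.mem_toRight.1 hk)
  rw [hsplit, hmul, hξprod, hSprod, ← Finset.toLeft_disjSum_toRight (u := s),
    Finset.prod_disjSum]
  rfl

/-- Independence of the pairs `(ξ i, S i')` and `(ξ j, S j')` for distinct indices. -/
lemma xi_S_pair_indep {Ω : Type*} [MeasurableSpace Ω] {P : Measure Ω} [IsProbabilityMeasure P]
    {𝕊 : Type u} [MeasurableSpace 𝕊]
    {S : ℕ → Ω → ℝ} (hSmeas : ∀ k, Measurable (S k))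
    (hSindep : iIndepFun S P)
    {ξ : ℕ → Ω → 𝕊} (hξmeas : ∀ k, Measurable (ξ k))
    (hξindep : iIndepFun ξ P)
    (hξS : IndepFun (fun ω k => ξ k ω) (fun ω k => S k ω) P)
    {i j i' j' : ℕ} (hij : i ≠ j) (hij' : i' ≠ j') :
    IndepFun (fun ω => (ξ i ω, S i' ω)) (fun ω => (ξ j ω, S j' ω)) P := by
  set S' : ℕ → Ω → ULift.{u} ℝ := fun k ω => ULift.up (S k ω) with hS'
  have hS'indep : iIndepFun S' P :=
    hSindep.comp (fun _ => ULift.up) (fun _ => measurable_up)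
  have hξS' : IndepFun (fun ω k => ξ k ω) (fun ω k => S' k ω) P :=
    hξS.comp measurable_id
      (measurable_pi_lambda _ fun k => measurable_up.comp (measurable_pi_apply k))
  have hmerge := merged_iIndepFun hS'indep hξindep hξS'
  have hpair := hmerge.indepFun_prodMk_prodMk
      (fun iSum => by rcases iSum with k | k
                      · exact hξmeas k
                      · exact measurable_up.comp (hSmeas k))
      (Sum.inl i) (Sum.inr i') (Sum.inl j) (Sum.inr j')
      (by simp [hij]) (by simp) (by simp) (by simp [hij'])
  have hφ : Measurable (fun q : 𝕊 × ULift.{u} ℝ => (q.1, q.2.down)) :=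
    measurable_fst.prodMk (measurable_down.comp measurable_snd)
  exact hpair.comp hφ hφ

end Independence

/-- Ergodic computation under renewal-process switching with i.i.d. modes: the time
average of the mode-dependent constant rate `λ_{r(t)}` converges almost surely to its
mean `Σ_i p_i λ_i` under the mode distribution. -/
theorem stmt_13 {Ω : Type*} [MeasurableSpace Ω] (P : Measure Ω) [IsProbabilityMeasure P]
    {𝕊 : Type*} [Fintype 𝕊] [MeasurableSpace 𝕊] [MeasurableSingletonClass 𝕊]
    -- the i.i.d. dwell times
    (S : ℕ → Ω → ℝ) (hSmeas : ∀ k, Measurable (S k))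
    (hSindep : iIndepFun S P)
    (hSident : ∀ k ≥ 1, IdentDistrib (S k) (S 1) P P)
    (hSpos : ∀ᵐ ω ∂P, 0 < S 1 ω)
    (hSint : Integrable (S 1) P)
    (θ : ℝ) (hθpos : 0 < θ) (hθ : (∫ ω, S 1 ω ∂P) = θ)
    -- the i.i.d. modes, independent of the dwell times
    (ξ : ℕ → Ω → 𝕊) (hξmeas : ∀ k, Measurable (ξ k))
    (hξindep : iIndepFun ξ P)
    (hξident : ∀ k, IdentDistrib (ξ k) (ξ 0) P P)
    (hξS : IndepFun (fun ω k => ξ k ω) (fun ω k => S k ω) P)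
    (p : 𝕊 → ℝ) (hp : ∀ i, (P {ω | ξ 0 ω = i}).toReal = p i)
    -- the mode-dependent constant rates
    (lam : 𝕊 → ℝ)
    -- the switching signal `r(t) = ξ_k` on `[t_k, t_{k+1})`
    (r : ℝ → Ω → 𝕊)
    (hr : ∀ᵐ ω ∂P, ∀ k, ∀ s ∈ Set.Ico (renewalTime S k ω) (renewalTime S (k + 1) ω),
      r s ω = ξ k ω) :
    ∀ᵐ ω ∂P,
      Filter.Tendsto (fun t : ℝ => (∫ h in (0 : ℝ)..t, lam (r h ω)) / t)
        Filter.atTop (nhds (∑ i : 𝕊, p i * lam i)) := by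
  classical
  have hlam_meas : Measurable lam := measurable_of_countable _
  set m : ℝ := ∑ i : 𝕊, p i * lam i with hm_def
  set C : ℝ := ∑ i : 𝕊, |lam i| with hC_def
  have haC : ∀ s : 𝕊, |lam s| ≤ C := fun s =>
    Finset.single_le_sum (f := fun i => |lam i|) (fun i _ => abs_nonneg _) (Finset.mem_univ s)
  set X : ℕ → Ω → ℝ := fun k ω => lam (ξ k ω) * S (k + 1) ω with hX_def
  have hξSk : ∀ k l, IndepFun (ξ k) (S l) P := fun k l =>
    hξS.comp (measurable_pi_apply k) (measurable_pi_apply l)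
  have hg0 : Measurable (fun q : 𝕊 × ℝ => lam q.1 * q.2) :=
    (hlam_meas.comp measurable_fst).mul measurable_snd
  have hXindep : Pairwise (Function.onFun (IndepFun · · P) X) := by
    intro i j hij
    exact (xi_S_pair_indep hSmeas hSindep hξmeas hξindep hξS hij
      (fun h => hij (Nat.succ_injective h))).comp hg0 hg0
  have hXident : ∀ k, IdentDistrib (X k) (X 0) P P := by
    intro k
    have hpk : IdentDistrib (fun ω => (ξ k ω, S (k + 1) ω)) (fun ω => (ξ 0 ω, S 1 ω)) P P := by
      refine ⟨((hξmeas k).prodMk (hSmeas (k + 1))).aemeasurable,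
        ((hξmeas 0).prodMk (hSmeas 1)).aemeasurable, ?_⟩
      rw [(indepFun_iff_map_prod_eq_prod_map_map ((hξmeas k).aemeasurable)
            ((hSmeas (k + 1)).aemeasurable)).1 (hξSk k (k + 1)),
        (indepFun_iff_map_prod_eq_prod_map_map ((hξmeas 0).aemeasurable)
            ((hSmeas 1).aemeasurable)).1 (hξSk 0 1),
        (hξident k).map_eq, (hSident (k + 1) (by omega)).map_eq]
    exact hpk.comp hg0
  have hXint : Integrable (X 0) P := by
    have h1 : Integrable (fun ω => lam (ξ 0 ω) * S 1 ω) P :=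
      hSint.bdd_mul (c := C) ((hlam_meas.comp (hξmeas 0)).aestronglyMeasurable)
        (ae_of_all _ fun ω => by simpa [Real.norm_eq_abs] using haC (ξ 0 ω))
    exact h1
  have hlam_int_eq : (∫ ω, lam (ξ 0 ω) ∂P) = m := by
    have hrep : (fun ω => lam (ξ 0 ω))
        = fun ω => ∑ i : 𝕊, Set.indicator {ω' | ξ 0 ω' = i} (fun _ => lam i) ω := by
      funext ω
      rw [Finset.sum_eq_single (ξ 0 ω)]
      · rw [Set.indicator_of_mem (by simp : ω ∈ {ω' | ξ 0 ω' = ξ 0 ω})]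
      · intro b _ hb
        exact Set.indicator_of_notMem (fun h => hb (Eq.symm h)) _
      · intro h
        exact absurd (Finset.mem_univ _) h
    have hms : ∀ i : 𝕊, MeasurableSet {ω' | ξ 0 ω' = i} := fun i =>
      (hξmeas 0) (measurableSet_singleton i)
    rw [hrep, integral_finset_sum _ fun i _ => (integrable_const (lam i)).indicator (hms i),
      hm_def]
    refine Finset.sum_congr rfl fun i _ => ?_
    rw [integral_indicator_const _ (hms i), smul_eq_mul, measureReal_def, hp i]
  have hEX : P[X 0] = m * θ := by
    have h1 : (∫ ω, lam (ξ 0 ω) * S 1 ω ∂P)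
        = (∫ ω, lam (ξ 0 ω) ∂P) * ∫ ω, S 1 ω ∂P :=
      IndepFun.integral_mul_eq_mul_integral ((hξSk 0 1).comp hlam_meas measurable_id)
        ((hlam_meas.comp (hξmeas 0)).aestronglyMeasurable) hSint.aestronglyMeasurable
    calc P[X 0] = ∫ ω, lam (ξ 0 ω) * S 1 ω ∂P := rfl
      _ = m * θ := by rw [h1, hlam_int_eq, hθ]
  have hX_ae := strong_law_ae_real X hXint hXindep hXident
  rw [hEX] at hX_ae
  -- SLLN for dwell times
  have hY_ae := strong_law_ae_real (fun k => S (k + 1)) hSint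
    (fun i j hij => hSindep.indepFun (fun h => hij (Nat.succ_injective h)))
    (fun k => hSident (k + 1) (by omega))
  have hY_val : P[(fun k => S (k + 1)) 0] = θ := hθ
  rw [hY_val] at hY_ae
  -- positivity of all dwell times
  have hpos_all : ∀ᵐ ω ∂P, ∀ k : ℕ, 0 < S (k + 1) ω := by
    rw [ae_all_iff]
    intro k
    exact (hSident (k + 1) (by omega)).symm.ae_snd (p := fun x => 0 < x)
      measurableSet_Ioi hSpos
  filter_upwards [hX_ae, hY_ae, hpos_all, hr] with ω hXω hYω hposω hrω
  have hT0 : renewalTime S 0 ω = 0 := renewalTime_zero S ω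
  have hTmono : StrictMono (fun n => renewalTime S n ω) := by
    apply strictMono_nat_of_lt_succ
    intro n
    have := hposω n
    simp only [renewalTime_succ]
    linarith
  have hTlim : Tendsto (fun n : ℕ => renewalTime S n ω / n) atTop (𝓝 θ) := by
    refine hYω.congr fun n => ?_
    rw [renewalTime_eq_sum_range]
  have hAlim : Tendsto (fun n : ℕ => (∑ k ∈ Finset.range n, X k ω) / n)
      atTop (𝓝 (m * θ)) := hXω
  have hstep : ∀ k : ℕ, ∀ s ∈ Set.Ico (renewalTime S k ω) (renewalTime S (k + 1) ω),
      lam (r s ω) = lam (ξ k ω) := fun k s hs => by rw [hrω k s hs]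
  have hle : ∀ k : ℕ, renewalTime S k ω ≤ renewalTime S (k + 1) ω := fun k => by
    rw [renewalTime_succ]
    linarith [hposω k]
  have hInt0 : ∀ n : ℕ,
      IntervalIntegrable (fun h => lam (r h ω)) volume 0 (renewalTime S n ω) := by
    intro n
    induction n with
    | zero =>
      rw [renewalTime_zero]
    | succ n ih => exact ih.trans (step_intervalIntegrable (hle n) (hstep n))
  have hval : ∀ n : ℕ, (∫ h in (0:ℝ)..(renewalTime S n ω), lam (r h ω))
      = ∑ k ∈ Finset.range n, X k ω := by
    intro n
    induction n with
    | zero => rw [renewalTime_zero]; simp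
    | succ n ih =>
      rw [← intervalIntegral.integral_add_adjacent_intervals (hInt0 n)
          (step_intervalIntegrable (hle n) (hstep n)), ih,
        step_integral (hle n) (hstep n), Finset.sum_range_succ]
      congr 1
      simp only [hX_def, renewalTime_succ]
      ring
  refine detRenewal (fun n => renewalTime S n ω) (fun n => ∑ k ∈ Finset.range n, X k ω)
    (fun n => lam (ξ n ω)) C m θ hθpos hT0 hTmono hTlim hAlim (fun n => haC (ξ n ω))
    (fun t => ∫ h in (0:ℝ)..t, lam (r h ω)) ?_
  intro n t ht
  obtain ⟨htn, htn1⟩ := ht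
  show (∫ h in (0:ℝ)..t, lam (r h ω))
      = (∑ k ∈ Finset.range n, X k ω) + lam (ξ n ω) * (t - renewalTime S n ω)
  have h2int : IntervalIntegrable (fun h => lam (r h ω)) volume (renewalTime S n ω) t :=
    step_intervalIntegrable htn fun s hs => hstep n s ⟨hs.1, hs.2.trans htn1⟩
  rw [← intervalIntegral.integral_add_adjacent_intervals (hInt0 n) h2int, hval n,
    step_integral htn fun s hs => hstep n s ⟨hs.1, hs.2.trans htn1⟩]
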